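/- Let h be a complex number with exp(h) ≠ 1 and let [x] = (exp(hx/2) − exp(−hx/2))/(exp(h/2) − exp(−h/2)) for x ∈ ℂ. Let k ≥ 1 be an integer, fix two distinct indices l, p in the integer interval [−k, k−1], and let complex numbers L_{r,2k−2} (r ∈ [1−k, k−2]), L_{j,2k−1} (j ∈ [1−k, k−1]) and L_{r,2k} (r ∈ [−k, k−1], r ≠ l, r ≠ p) be given such that [L_{r,2k−1} − L_{j,2k−1} − s'] ≠ 0 and [L_{r,2k−1} − L_{j,2k−1} − s' + 1] ≠ 0 for all r ≠ j in [1−k, k−1] and s' ∈ {0, 1}. Then ∑_{s'=0}^{1} ∑_{j=1−k}^{k−1} (−1)^{s'} · ( ∏_{r=1−k}^{k−2} [L_{r,2k−2} − L_{j,2k−1} − s'] · ∏_{r=−k, r≠l,p}^{k−1} [L_{r,2k} − L_{j,2k−1} − s'] ) / ( ∏_{r≠j, r=1−k}^{k−1} [L_{r,2k−1} − L_{j,2k−1} − s'][L_{r,2k−1} − L_{j,2k−1} − s' + 1] ) = 0. (Identity (24c).) -/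

import Mathlib

open Polynomial Finset


/-- The q-bracket `[x] = (exp(hx/2) - exp(-hx/2))/(exp(h/2) - exp(-h/2))`. -/
noncomputable def qbr (h x : ℂ) : ℂ :=
  (Complex.exp (h * x / 2) - Complex.exp (-(h * x) / 2)) /
    (Complex.exp (h / 2) - Complex.exp (-h / 2))

lemma qbr_sub (h x y : ℂ) : qbr h (x - y) =
    Complex.exp (-(h * x) / 2) * Complex.exp (-(h * y) / 2) *
      (Complex.exp (h * x) - Complex.exp (h * y)) / (Complex.exp (h / 2) - Complex.exp (-h / 2)) := by
  unfold qbr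
  congr 1
  rw [mul_sub, mul_sub, ← Complex.exp_add, ← Complex.exp_add, ← Complex.exp_add]
  congr 2 <;> ring

lemma qbr_zero_of_exp_eq {h x y : ℂ} (hxy : Complex.exp (h * x) = Complex.exp (h * y)) :
    qbr h (x - y) = 0 := by
  rw [qbr_sub, hxy, sub_self, mul_zero, zero_div]

lemma exp_sub_ne_of_qbr {h x y : ℂ} (hq : qbr h (x - y) ≠ 0) :
    Complex.exp (h * x) - Complex.exp (h * y) ≠ 0 := by
  intro hc
  exact hq (by rw [qbr_sub, hc, mul_zero, zero_div])

lemma D_ne {h : ℂ} (hh : Complex.exp h ≠ 1) :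
    Complex.exp (h / 2) - Complex.exp (-h / 2) ≠ 0 := by
  intro hc
  apply hh
  have h1 : Complex.exp (h / 2) = Complex.exp (-h / 2) := sub_eq_zero.mp hc
  calc Complex.exp h = Complex.exp (h / 2) * Complex.exp (h / 2) := by
        rw [← Complex.exp_add]; congr 1; ring
    _ = Complex.exp (h / 2) * Complex.exp (-h / 2) := by rw [h1]
    _ = 1 := by rw [← Complex.exp_add, show h / 2 + -h / 2 = 0 by ring, Complex.exp_zero]

lemma lagrange_sum_zero {ι : Type*} [DecidableEq ι] (s : Finset ι) (v : ι → ℂ)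
    (hvs : Set.InjOn v s) (P : Polynomial ℂ) (hP : P.degree < ((s.card - 1 : ℕ) : WithBot ℕ)) :
    ∑ i ∈ s, P.eval (v i) / ∏ j ∈ s.erase i, (v i - v j) = 0 := by
  rcases Finset.eq_empty_or_nonempty s with rfl | hs
  · simp
  have hdeg : P.degree < (s.card : WithBot ℕ) := by
    refine lt_of_lt_of_le hP ?_
    exact WithBot.coe_le_coe.mpr (Nat.sub_le _ _)
  have h2 : P = Lagrange.interpolate s v (fun i => P.eval (v i)) :=
    Lagrange.eq_interpolate hvs hdeg
  have hb : ∀ i ∈ s, (Lagrange.basis s v i).coeff (s.card - 1) = Lagrange.nodalWeight s v i := by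
    intro i hi
    have h1 : Lagrange.basis s v i = C (Lagrange.nodalWeight s v i) * Lagrange.nodal (s.erase i) v := by
      rw [Lagrange.basis_eq_prod_sub_inv_mul_nodal_div hi, Lagrange.nodal_erase_eq_nodal_div hi]
    have hc : (s.erase i).card = s.card - 1 := Finset.card_erase_of_mem hi
    have hm : (Lagrange.nodal (s.erase i) v).coeff (s.card - 1) = 1 := by
      rw [← hc, ← Lagrange.natDegree_nodal (s := s.erase i) (v := v)]
      exact Lagrange.nodal_monic.coeff_natDegree
    rw [h1, coeff_C_mul, hm, mul_one]
  have h0 : P.coeff (s.card - 1) = 0 := coeff_eq_zero_of_degree_lt hP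
  have h3 : (0 : ℂ) = ∑ i ∈ s, P.eval (v i) * Lagrange.nodalWeight s v i := by
    calc (0 : ℂ) = P.coeff (s.card - 1) := h0.symm
      _ = (Lagrange.interpolate s v (fun i => P.eval (v i))).coeff (s.card - 1) := by rw [← h2]
      _ = ∑ i ∈ s, P.eval (v i) * (Lagrange.basis s v i).coeff (s.card - 1) := by
          rw [Lagrange.interpolate_apply, Polynomial.finset_sum_coeff]
          exact Finset.sum_congr rfl fun i _ => by rw [coeff_C_mul]
      _ = ∑ i ∈ s, P.eval (v i) * Lagrange.nodalWeight s v i :=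
          Finset.sum_congr rfl fun i hi => by rw [hb i hi]
  rw [show (∑ i ∈ s, P.eval (v i) / ∏ j ∈ s.erase i, (v i - v j)) =
      ∑ i ∈ s, P.eval (v i) * Lagrange.nodalWeight s v i from
    Finset.sum_congr rfl fun i _ => by
      rw [Lagrange.nodalWeight, div_eq_mul_inv, Finset.prod_inv_distrib]]
  exact h3.symm

/-- node map -/
noncomputable def nodeV (h : ℂ) (B : ℤ → ℂ) : ℕ × ℤ → ℂ :=
  fun i => Complex.exp (h * (B i.2 + (i.1 : ℂ)))

lemma final_identity_pos (KA KC K1 K2 PA PC P1 P2 Fm Dm F1 F2 X E : ℂ)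
    (hFm : Fm ≠ 0) (hDm : Dm ≠ 0) (hK1 : K1 ≠ 0) (hK2 : K2 ≠ 0)
    (hP1 : P1 ≠ 0) (hP2 : P2 ≠ 0) (hX : X ≠ 0) (hF1 : F1 ≠ 0) (hF2 : F2 ≠ 0)
    (hE : E - 1 ≠ 0) :
    (KA * Fm * PA / Dm * (KC * Fm * PC / Dm)) / (K1 * Fm * P1 / Dm * (K2 * Fm * P2 / Dm))
      = -(KA * KC * ((E - 1) * (F1 * F2 * X)) / (F1 * F2 * (K1 * K2))) *
        (PA * PC / (-(X * (E - 1)) * (P1 * P2))) := by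
  rw [div_mul_div_comm, div_mul_div_comm, div_div_div_cancel_right₀ (mul_ne_zero hDm hDm)]
  field_simp

lemma final_identity_neg (KA KC K1 K2 PA PC P1 P2 Fm Dm F1 F2 X E : ℂ)
    (hFm : Fm ≠ 0) (hDm : Dm ≠ 0) (hK1 : K1 ≠ 0) (hK2 : K2 ≠ 0)
    (hP1 : P1 ≠ 0) (hP2 : P2 ≠ 0) (hX : X ≠ 0) (hF1 : F1 ≠ 0) (hF2 : F2 ≠ 0)
    (hE : E - 1 ≠ 0) :
    (-1 : ℂ) * (KA * Fm * PA / Dm * (KC * Fm * PC / Dm)) /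
        (K1 * Fm * P1 / Dm * (K2 * Fm * P2 / Dm))
      = -(KA * KC * ((E - 1) * (F1 * F2 * X)) / (F1 * F2 * (K1 * K2))) *
        (PA * PC / (X * (E - 1) * (P1 * P2))) := by
  rw [mul_div_assoc, div_mul_div_comm, div_mul_div_comm,
    div_div_div_cancel_right₀ (mul_ne_zero hDm hDm)]
  field_simp

set_option maxHeartbeats 4000000 in
/-- Identity (24c).  `A r` stands for `L_{r,2k-2}`, `B j` for `L_{j,2k-1}` and
`C r` for `L_{r,2k}`. -/
theorem identity_24c (h : ℂ) (hh : Complex.exp h ≠ 1) (k : ℤ) (hk : 1 ≤ k)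
    (l p : ℤ) (hl : l ∈ Finset.Icc (-k) (k - 1)) (hp : p ∈ Finset.Icc (-k) (k - 1))
    (hlp : l ≠ p) (A B C : ℤ → ℂ)
    (hB : ∀ r ∈ Finset.Icc (1 - k) (k - 1), ∀ j ∈ Finset.Icc (1 - k) (k - 1), r ≠ j →
      ∀ s' ∈ Finset.range 2,
        qbr h (B r - B j - (s' : ℂ)) ≠ 0 ∧ qbr h (B r - B j - (s' : ℂ) + 1) ≠ 0) :
    ∑ s' ∈ Finset.range 2, ∑ j ∈ Finset.Icc (1 - k) (k - 1), (-1 : ℂ) ^ s' *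
      ((∏ r ∈ Finset.Icc (1 - k) (k - 2), qbr h (A r - B j - (s' : ℂ))) *
        ∏ r ∈ ((Finset.Icc (-k) (k - 1)).erase l).erase p, qbr h (C r - B j - (s' : ℂ))) /
      ∏ r ∈ (Finset.Icc (1 - k) (k - 1)).erase j,
        qbr h (B r - B j - (s' : ℂ)) * qbr h (B r - B j - (s' : ℂ) + 1) = 0 := by
  set RA := Finset.Icc (1 - k) (k - 2) with hRAdef
  set RB := Finset.Icc (1 - k) (k - 1) with hRBdef
  set RC := ((Finset.Icc (-k) (k - 1)).erase l).erase p with hRCdef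
  set Dq := Complex.exp (h / 2) - Complex.exp (-h / 2) with hDqdef
  have hDq : Dq ≠ 0 := D_ne hh
  set v := nodeV h B with hvdef
  set S : Finset (ℕ × ℤ) := Finset.range 2 ×ˢ RB with hSdef
  set Pn : Polynomial ℂ :=
    (∏ r ∈ RA, (Polynomial.C (Complex.exp (h * A r)) - Polynomial.X)) *
      ∏ r ∈ RC, (Polynomial.C (Complex.exp (h * C r)) - Polynomial.X) with hPndef
  -- cardinalities
  have hRAcard : RA.card = (2 * k - 2).toNat := by
    rw [hRAdef, Int.card_Icc]; congr 1; ring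
  have hRBcard : RB.card = (2 * k - 1).toNat := by
    rw [hRBdef, Int.card_Icc]; congr 1; ring
  have hRCcard : RC.card = (2 * k - 2).toNat := by
    have hpl : p ∈ (Finset.Icc (-k) (k - 1)).erase l := Finset.mem_erase.mpr ⟨hlp.symm, hp⟩
    rw [hRCdef, Finset.card_erase_of_mem hpl, Finset.card_erase_of_mem hl, Int.card_Icc]
    have : (k - 1 + 1 - -k).toNat = (2 * k).toNat := by congr 1; ring
    omega
  have hScard : S.card = 2 * (2 * k - 1).toNat := by
    rw [hSdef, Finset.card_product, Finset.card_range, hRBcard]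
  -- injectivity of the nodes
  have hinj : Set.InjOn v S := by
    rintro ⟨s1, j1⟩ h1 ⟨s2, j2⟩ h2 heq
    rw [Finset.coe_product, Set.mem_prod] at h1 h2
    obtain ⟨hs1, hj1⟩ := h1
    obtain ⟨hs2, hj2⟩ := h2
    rw [Finset.mem_coe, Finset.mem_range] at hs1 hs2
    rw [Finset.mem_coe] at hj1 hj2
    have heq' : Complex.exp (h * (B j1 + (s1 : ℂ))) = Complex.exp (h * (B j2 + (s2 : ℂ))) := heq
    rcases eq_or_ne j1 j2 with rfl | hj
    · have hs : s1 = s2 := by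
        by_contra hs
        apply hh
        have hx : Complex.exp (h * (B j1 + (s1 : ℂ))) =
            Complex.exp (h * B j1) * Complex.exp (h * (s1 : ℂ)) := by
          rw [← Complex.exp_add]; congr 1; ring
        have hy : Complex.exp (h * (B j1 + (s2 : ℂ))) =
            Complex.exp (h * B j1) * Complex.exp (h * (s2 : ℂ)) := by
          rw [← Complex.exp_add]; congr 1; ring
        rw [hx, hy] at heq'
        have h12 : Complex.exp (h * (s1 : ℂ)) = Complex.exp (h * (s2 : ℂ)) :=
          mul_left_cancel₀ (Complex.exp_ne_zero _) heq'
        rcases show (s1 = 0 ∧ s2 = 1) ∨ (s1 = 1 ∧ s2 = 0) by omega with ⟨rfl, rfl⟩ | ⟨rfl, rfl⟩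
        · have : Complex.exp 0 = Complex.exp h := by
            simpa using h12
          rw [Complex.exp_zero] at this; exact this.symm
        · have : Complex.exp h = Complex.exp 0 := by
            simpa using h12
          rw [Complex.exp_zero] at this; exact this
      rw [hs]
    · exfalso
      have hq0 : qbr h ((B j1 + (s1 : ℂ)) - (B j2 + (s2 : ℂ))) = 0 := qbr_zero_of_exp_eq heq'
      rcases show s1 = 0 ∨ s1 = 1 by omega with rfl | rfl
      · have : qbr h (B j1 - B j2 - (s2 : ℂ)) = 0 := by
          rw [show B j1 - B j2 - (s2 : ℂ) = (B j1 + ((0:ℕ) : ℂ)) - (B j2 + (s2 : ℂ)) by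
            push_cast; ring]
          exact hq0
        exact (hB j1 hj1 j2 hj2 hj s2 (Finset.mem_range.mpr hs2)).1 this
      · have : qbr h (B j1 - B j2 - (s2 : ℂ) + 1) = 0 := by
          rw [show B j1 - B j2 - (s2 : ℂ) + 1 = (B j1 + ((1:ℕ) : ℂ)) - (B j2 + (s2 : ℂ)) by
            push_cast; ring]
          exact hq0
        exact (hB j1 hj1 j2 hj2 hj s2 (Finset.mem_range.mpr hs2)).2 this
  -- degree bound
  have hdeg : Pn.degree < ((S.card - 1 : ℕ) : WithBot ℕ) := by
    have hA1 : (∏ r ∈ RA, (Polynomial.C (Complex.exp (h * A r)) - Polynomial.X)).natDegree ≤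
        RA.card := by
      refine le_trans (Polynomial.natDegree_prod_le _ _) (le_of_eq ?_)
      calc ∑ r ∈ RA, (Polynomial.C (Complex.exp (h * A r)) - Polynomial.X).natDegree
          = ∑ _r ∈ RA, 1 := Finset.sum_congr rfl fun r _ => by
            rw [show Polynomial.C (Complex.exp (h * A r)) - Polynomial.X =
              -(Polynomial.X - Polynomial.C (Complex.exp (h * A r))) by ring,
              Polynomial.natDegree_neg, Polynomial.natDegree_X_sub_C]
        _ = RA.card := by simp
    have hC1 : (∏ r ∈ RC, (Polynomial.C (Complex.exp (h * C r)) - Polynomial.X)).natDegree ≤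
        RC.card := by
      refine le_trans (Polynomial.natDegree_prod_le _ _) (le_of_eq ?_)
      calc ∑ r ∈ RC, (Polynomial.C (Complex.exp (h * C r)) - Polynomial.X).natDegree
          = ∑ _r ∈ RC, 1 := Finset.sum_congr rfl fun r _ => by
            rw [show Polynomial.C (Complex.exp (h * C r)) - Polynomial.X =
              -(Polynomial.X - Polynomial.C (Complex.exp (h * C r))) by ring,
              Polynomial.natDegree_neg, Polynomial.natDegree_X_sub_C]
        _ = RC.card := by simp
    have hPdeg : Pn.natDegree ≤ RA.card + RC.card :=
      le_trans (Polynomial.natDegree_mul_le) (add_le_add hA1 hC1)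
    have hlt : RA.card + RC.card < S.card - 1 := by
      rw [hRAcard, hRCcard, hScard]; omega
    calc Pn.degree ≤ (Pn.natDegree : WithBot ℕ) := Polynomial.degree_le_natDegree
      _ ≤ ((RA.card + RC.card : ℕ) : WithBot ℕ) := WithBot.coe_le_coe.mpr hPdeg
      _ < ((S.card - 1 : ℕ) : WithBot ℕ) := WithBot.coe_lt_coe.mpr hlt
  have main := lagrange_sum_zero S v hinj Pn hdeg
  -- the key per-term identity
  have key : ∀ s' ∈ Finset.range 2, ∀ j ∈ RB,
      (-1 : ℂ) ^ s' *
        ((∏ r ∈ RA, qbr h (A r - B j - (s' : ℂ))) * ∏ r ∈ RC, qbr h (C r - B j - (s' : ℂ))) /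
        ∏ r ∈ RB.erase j, qbr h (B r - B j - (s' : ℂ)) * qbr h (B r - B j - (s' : ℂ) + 1)
      = (-((∏ r ∈ RA, Complex.exp (-(h * A r) / 2)) * (∏ r ∈ RC, Complex.exp (-(h * C r) / 2)) *
            ((Complex.exp h - 1) * Complex.exp (-h / 2)) /
            ∏ r ∈ RB, (Complex.exp (-(h * B r) / 2) * Complex.exp (-(h * (B r + 1)) / 2)))) *
          (Pn.eval (v (s', j)) / ∏ i' ∈ S.erase (s', j), (v (s', j) - v i')) := by
    intro s' hs' j hj
    have hs2 : s' < 2 := Finset.mem_range.mp hs'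
    set u : ℂ := B j + (s' : ℂ) with hudef
    set w : ℂ := Complex.exp (h * u) with hwdef
    set m := (RB.erase j).card with hmdef
    have hmcard : m = (2 * k - 1).toNat - 1 := by
      rw [hmdef, Finset.card_erase_of_mem hj, hRBcard]
    have hmRA : RA.card = m := by rw [hRAcard, hmcard]; omega
    have hmRC : RC.card = m := by rw [hRCcard, hmcard]; omega
    have hv : v (s', j) = w := by rw [hvdef, hwdef, hudef]; rfl
    have hN1 : (∏ r ∈ RA, qbr h (A r - B j - (s' : ℂ))) =
        (∏ r ∈ RA, Complex.exp (-(h * A r) / 2)) * Complex.exp (-(h * u) / 2) ^ m *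
          (∏ r ∈ RA, (Complex.exp (h * A r) - w)) / Dq ^ m := by
      calc ∏ r ∈ RA, qbr h (A r - B j - (s' : ℂ))
          = ∏ r ∈ RA, (Complex.exp (-(h * A r) / 2) * Complex.exp (-(h * u) / 2) *
              (Complex.exp (h * A r) - w) / Dq) := Finset.prod_congr rfl fun r _ => by
            rw [show A r - B j - (s' : ℂ) = A r - u by rw [hudef]; ring, qbr_sub, hwdef, hDqdef]
        _ = (∏ r ∈ RA, Complex.exp (-(h * A r) / 2)) * Complex.exp (-(h * u) / 2) ^ RA.card *
              (∏ r ∈ RA, (Complex.exp (h * A r) - w)) / Dq ^ RA.card := by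
            rw [Finset.prod_div_distrib, Finset.prod_mul_distrib, Finset.prod_mul_distrib,
              Finset.prod_const, Finset.prod_const]
        _ = _ := by rw [hmRA]
    have hN2 : (∏ r ∈ RC, qbr h (C r - B j - (s' : ℂ))) =
        (∏ r ∈ RC, Complex.exp (-(h * C r) / 2)) * Complex.exp (-(h * u) / 2) ^ m *
          (∏ r ∈ RC, (Complex.exp (h * C r) - w)) / Dq ^ m := by
      calc ∏ r ∈ RC, qbr h (C r - B j - (s' : ℂ))
          = ∏ r ∈ RC, (Complex.exp (-(h * C r) / 2) * Complex.exp (-(h * u) / 2) *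
              (Complex.exp (h * C r) - w) / Dq) := Finset.prod_congr rfl fun r _ => by
            rw [show C r - B j - (s' : ℂ) = C r - u by rw [hudef]; ring, qbr_sub, hwdef, hDqdef]
        _ = (∏ r ∈ RC, Complex.exp (-(h * C r) / 2)) * Complex.exp (-(h * u) / 2) ^ RC.card *
              (∏ r ∈ RC, (Complex.exp (h * C r) - w)) / Dq ^ RC.card := by
            rw [Finset.prod_div_distrib, Finset.prod_mul_distrib, Finset.prod_mul_distrib,
              Finset.prod_const, Finset.prod_const]
        _ = _ := by rw [hmRC]
    have hDd1 : (∏ r ∈ RB.erase j, qbr h (B r - B j - (s' : ℂ))) =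
        (∏ r ∈ RB.erase j, Complex.exp (-(h * B r) / 2)) * Complex.exp (-(h * u) / 2) ^ m *
          (∏ r ∈ RB.erase j, (Complex.exp (h * B r) - w)) / Dq ^ m := by
      calc ∏ r ∈ RB.erase j, qbr h (B r - B j - (s' : ℂ))
          = ∏ r ∈ RB.erase j, (Complex.exp (-(h * B r) / 2) * Complex.exp (-(h * u) / 2) *
              (Complex.exp (h * B r) - w) / Dq) := Finset.prod_congr rfl fun r _ => by
            rw [show B r - B j - (s' : ℂ) = B r - u by rw [hudef]; ring, qbr_sub, hwdef, hDqdef]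
        _ = (∏ r ∈ RB.erase j, Complex.exp (-(h * B r) / 2)) *
              Complex.exp (-(h * u) / 2) ^ (RB.erase j).card *
              (∏ r ∈ RB.erase j, (Complex.exp (h * B r) - w)) / Dq ^ (RB.erase j).card := by
            rw [Finset.prod_div_distrib, Finset.prod_mul_distrib, Finset.prod_mul_distrib,
              Finset.prod_const, Finset.prod_const]
        _ = _ := by rw [← hmdef]
    have hDd2 : (∏ r ∈ RB.erase j, qbr h (B r - B j - (s' : ℂ) + 1)) =
        (∏ r ∈ RB.erase j, Complex.exp (-(h * (B r + 1)) / 2)) * Complex.exp (-(h * u) / 2) ^ m *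
          (∏ r ∈ RB.erase j, (Complex.exp (h * (B r + 1)) - w)) / Dq ^ m := by
      calc ∏ r ∈ RB.erase j, qbr h (B r - B j - (s' : ℂ) + 1)
          = ∏ r ∈ RB.erase j, (Complex.exp (-(h * (B r + 1)) / 2) * Complex.exp (-(h * u) / 2) *
              (Complex.exp (h * (B r + 1)) - w) / Dq) := Finset.prod_congr rfl fun r _ => by
            rw [show B r - B j - (s' : ℂ) + 1 = (B r + 1) - u by rw [hudef]; ring, qbr_sub,
              hwdef, hDqdef]
        _ = (∏ r ∈ RB.erase j, Complex.exp (-(h * (B r + 1)) / 2)) *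
              Complex.exp (-(h * u) / 2) ^ (RB.erase j).card *
              (∏ r ∈ RB.erase j, (Complex.exp (h * (B r + 1)) - w)) / Dq ^ (RB.erase j).card := by
            rw [Finset.prod_div_distrib, Finset.prod_mul_distrib, Finset.prod_mul_distrib,
              Finset.prod_const, Finset.prod_const]
        _ = _ := by rw [← hmdef]
    have hDd : (∏ r ∈ RB.erase j, qbr h (B r - B j - (s' : ℂ)) * qbr h (B r - B j - (s' : ℂ) + 1))
        = (∏ r ∈ RB.erase j, qbr h (B r - B j - (s' : ℂ))) *
          ∏ r ∈ RB.erase j, qbr h (B r - B j - (s' : ℂ) + 1) := Finset.prod_mul_distrib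
    have hPD1 : (∏ r ∈ RB.erase j, (Complex.exp (h * B r) - w)) ≠ 0 := by
      refine Finset.prod_ne_zero_iff.mpr fun r hr => ?_
      obtain ⟨hrj, hrB⟩ := Finset.mem_erase.mp hr
      have h1 := (hB r hrB j hj hrj s' hs').1
      rw [show B r - B j - (s' : ℂ) = B r - u from by rw [hudef]; ring] at h1
      have e1 := exp_sub_ne_of_qbr h1
      rw [← hwdef] at e1
      exact e1
    have hPD2 : (∏ r ∈ RB.erase j, (Complex.exp (h * (B r + 1)) - w)) ≠ 0 := by
      refine Finset.prod_ne_zero_iff.mpr fun r hr => ?_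
      obtain ⟨hrj, hrB⟩ := Finset.mem_erase.mp hr
      have h2 := (hB r hrB j hj hrj s' hs').2
      rw [show B r - B j - (s' : ℂ) + 1 = (B r + 1) - u from by rw [hudef]; ring] at h2
      have e2 := exp_sub_ne_of_qbr h2
      rw [← hwdef] at e2
      exact e2
    have hnotmem : ((1 - s' : ℕ), j) ∉ Finset.range 2 ×ˢ RB.erase j := by
      simp [Finset.mem_product]
    have hE : S.erase (s', j) = insert ((1 - s' : ℕ), j) (Finset.range 2 ×ˢ RB.erase j) := by
      ext ⟨t, r⟩
      simp only [hSdef, Finset.mem_erase, Finset.mem_insert, Finset.mem_product, Finset.mem_range,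
        Prod.mk.injEq, ne_eq]
      constructor
      · rintro ⟨hne, ht, hr⟩
        by_cases hrj : r = j
        · subst hrj
          have hts : t ≠ s' := fun htt => hne ⟨htt, rfl⟩
          exact Or.inl ⟨by omega, rfl⟩
        · exact Or.inr ⟨ht, ⟨hrj, hr⟩⟩
      · rintro (⟨ht, rfl⟩ | ⟨ht, hrj, hr⟩)
        · refine ⟨?_, by omega, hj⟩
          rintro ⟨h1, -⟩
          omega
        · exact ⟨fun hc => hrj hc.2, ht, hr⟩
    have hprod : (∏ i' ∈ S.erase (s', j), (w - v i')) =
        (w - v (1 - s', j)) * ∏ i' ∈ Finset.range 2 ×ˢ RB.erase j, (w - v i') := by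
      rw [hE, Finset.prod_insert hnotmem]
    have hPP : (∏ i' ∈ Finset.range 2 ×ˢ RB.erase j, (w - v i')) =
        (∏ r ∈ RB.erase j, (Complex.exp (h * B r) - w)) *
          ∏ r ∈ RB.erase j, (Complex.exp (h * (B r + 1)) - w) := by
      rw [Finset.prod_product, Finset.prod_range_succ, Finset.prod_range_succ,
        Finset.prod_range_zero, one_mul, ← Finset.prod_mul_distrib, ← Finset.prod_mul_distrib]
      refine Finset.prod_congr rfl fun r _ => ?_
      have e0 : v ((0 : ℕ), r) = Complex.exp (h * B r) := by
        rw [hvdef]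
        show Complex.exp (h * (B r + ((0 : ℕ) : ℂ))) = _
        congr 1; push_cast; ring
      have e1 : v ((1 : ℕ), r) = Complex.exp (h * (B r + 1)) := by
        rw [hvdef]
        show Complex.exp (h * (B r + ((1 : ℕ) : ℂ))) = _
        congr 1; push_cast; ring
      rw [e0, e1]; ring
    have heval : Pn.eval w =
        (∏ r ∈ RA, (Complex.exp (h * A r) - w)) * ∏ r ∈ RC, (Complex.exp (h * C r) - w) := by
      rw [hPndef, Polynomial.eval_mul, Polynomial.eval_prod, Polynomial.eval_prod]
      simp only [Polynomial.eval_sub, Polynomial.eval_C, Polynomial.eval_X]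
    have hKB : (∏ r ∈ RB, (Complex.exp (-(h * B r) / 2) * Complex.exp (-(h * (B r + 1)) / 2))) =
        (Complex.exp (-(h * B j) / 2) * Complex.exp (-(h * (B j + 1)) / 2)) *
          ((∏ r ∈ RB.erase j, Complex.exp (-(h * B r) / 2)) *
            ∏ r ∈ RB.erase j, Complex.exp (-(h * (B r + 1)) / 2)) := by
      rw [← Finset.prod_mul_distrib]
      exact (Finset.mul_prod_erase RB _ hj).symm
    have hexp : Complex.exp (-h / 2) =
        Complex.exp (-(h * B j) / 2) * Complex.exp (-(h * (B j + 1)) / 2) *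
          Complex.exp (h * B j) := by
      rw [← Complex.exp_add, ← Complex.exp_add]
      congr 1; ring
    have hFum : Complex.exp (-(h * u) / 2) ^ m ≠ 0 := pow_ne_zero _ (Complex.exp_ne_zero _)
    have hDqm : Dq ^ m ≠ 0 := pow_ne_zero _ hDq
    have hKBj1 : (∏ r ∈ RB.erase j, Complex.exp (-(h * B r) / 2)) ≠ 0 :=
      Finset.prod_ne_zero_iff.mpr fun r _ => Complex.exp_ne_zero _
    have hKBj2 : (∏ r ∈ RB.erase j, Complex.exp (-(h * (B r + 1)) / 2)) ≠ 0 :=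
      Finset.prod_ne_zero_iff.mpr fun r _ => Complex.exp_ne_zero _
    have he1 : Complex.exp h - 1 ≠ 0 := sub_ne_zero.mpr hh
    clear_value u w m Dq
    rw [hv, hN1, hN2, hDd, hDd1, hDd2, hprod, hPP, heval, hKB, hexp]
    rcases (show s' = 0 ∨ s' = 1 by omega) with rfl | rfl
    · have hva : v (1 - 0, j) = Complex.exp (h * B j) * Complex.exp h := by
        rw [hvdef]
        show Complex.exp (h * (B j + ((1 - 0 : ℕ) : ℂ))) = _
        rw [← Complex.exp_add]
        congr 1
        have : ((1 - 0 : ℕ) : ℂ) = 1 := by norm_num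
        rw [this]; ring
      have hpart : w - v (1 - 0, j) = -(Complex.exp (h * B j) * (Complex.exp h - 1)) := by
        rw [hva, hwdef, hudef]
        have h0 : Complex.exp (h * (B j + ((0 : ℕ) : ℂ))) = Complex.exp (h * B j) := by
          congr 1; push_cast; ring
        rw [h0]; ring
      rw [hpart]
      simp only [pow_zero, one_mul]
      exact final_identity_pos _ _ _ _ _ _ _ _ _ _ _ _ _ _ hFum hDqm hKBj1 hKBj2 hPD1 hPD2
        (Complex.exp_ne_zero _) (Complex.exp_ne_zero _) (Complex.exp_ne_zero _) he1
    · have hva : v (1 - 1, j) = Complex.exp (h * B j) := by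
        rw [hvdef]
        show Complex.exp (h * (B j + ((1 - 1 : ℕ) : ℂ))) = _
        congr 1
        have : ((1 - 1 : ℕ) : ℂ) = 0 := by norm_num
        rw [this]; ring
      have hpart : w - v (1 - 1, j) = Complex.exp (h * B j) * (Complex.exp h - 1) := by
        rw [hva, hwdef, hudef]
        have h1 : Complex.exp (h * (B j + ((1 : ℕ) : ℂ))) =
            Complex.exp (h * B j) * Complex.exp h := by
          rw [← Complex.exp_add]
          congr 1; push_cast; ring
        rw [h1]; ring
      rw [hpart]
      simp only [pow_one]
      exact final_identity_neg _ _ _ _ _ _ _ _ _ _ _ _ _ _ hFum hDqm hKBj1 hKBj2 hPD1 hPD2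
        (Complex.exp_ne_zero _) (Complex.exp_ne_zero _) (Complex.exp_ne_zero _) he1

  calc ∑ s' ∈ Finset.range 2, ∑ j ∈ RB, (-1 : ℂ) ^ s' *
        ((∏ r ∈ RA, qbr h (A r - B j - (s' : ℂ))) * ∏ r ∈ RC, qbr h (C r - B j - (s' : ℂ))) /
        ∏ r ∈ RB.erase j, qbr h (B r - B j - (s' : ℂ)) * qbr h (B r - B j - (s' : ℂ) + 1)
      = ∑ s' ∈ Finset.range 2, ∑ j ∈ RB,
          (-((∏ r ∈ RA, Complex.exp (-(h * A r) / 2)) * (∏ r ∈ RC, Complex.exp (-(h * C r) / 2)) *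
            ((Complex.exp h - 1) * Complex.exp (-h / 2)) /
            ∏ r ∈ RB, (Complex.exp (-(h * B r) / 2) * Complex.exp (-(h * (B r + 1)) / 2)))) *
          (Pn.eval (v (s', j)) / ∏ i' ∈ S.erase (s', j), (v (s', j) - v i')) :=
        Finset.sum_congr rfl fun s' hs' => Finset.sum_congr rfl fun j hj => key s' hs' j hj
    _ = ∑ i ∈ S,
          (-((∏ r ∈ RA, Complex.exp (-(h * A r) / 2)) * (∏ r ∈ RC, Complex.exp (-(h * C r) / 2)) *
            ((Complex.exp h - 1) * Complex.exp (-h / 2)) /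
            ∏ r ∈ RB, (Complex.exp (-(h * B r) / 2) * Complex.exp (-(h * (B r + 1)) / 2)))) *
          (Pn.eval (v i) / ∏ i' ∈ S.erase i, (v i - v i')) := by
        rw [hSdef, Finset.sum_product]
    _ = 0 := by rw [← Finset.mul_sum, main, mul_zero]
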